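/- For the Grushin inversion x_i = x̃_i d(z̃,0)^{-2}, y_j = ỹ_j d(z̃,0)^{-2-2γ}, for each fixed j one has Σ_{k=1}^N (∂y_j/∂x̃_k)² + |x̃|^{2γ} Σ_{h=1}^l (∂y_j/∂ỹ_h)² = |x̃|^{2γ} d(z̃,0)^{-4-4γ}. -/

import Mathlib

open MeasureTheory Real

noncomputable section

variable {N l : ℕ}

/-- squared Euclidean norm -/
def nsq {n : ℕ} (x : Fin n → ℝ) : ℝ := ∑ i, x i ^ 2

/-- partial derivative in the `i`-th `x` direction -/
def pdx (u : (Fin N → ℝ) × (Fin l → ℝ) → ℝ) (i : Fin N)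
    (z : (Fin N → ℝ) × (Fin l → ℝ)) : ℝ :=
  deriv (fun t => u (Function.update z.1 i t, z.2)) (z.1 i)

/-- partial derivative in the `j`-th `y` direction -/
def pdy (u : (Fin N → ℝ) × (Fin l → ℝ) → ℝ) (j : Fin l)
    (z : (Fin N → ℝ) × (Fin l → ℝ)) : ℝ :=
  deriv (fun t => u (z.1, Function.update z.2 j t)) (z.2 j)

/-- Grushin operator `Δ_γ u = Δ_x u + |x|^{2γ} Δ_y u` -/
def grushinLap (γ : ℝ) (u : (Fin N → ℝ) × (Fin l → ℝ) → ℝ)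
    (z : (Fin N → ℝ) × (Fin l → ℝ)) : ℝ :=
  (∑ i, pdx (pdx u i) i z) + (nsq z.1) ^ γ * ∑ j, pdy (pdy u j) j z

/-- the Grushin distance to the origin:
`d(z,0) = ((1/(1+γ)²)|x|^{2+2γ} + |y|²)^{1/(2+2γ)}` (note `|x|^{2+2γ} = (nsq x)^{1+γ}`). -/
def gd (γ : ℝ) (z : (Fin N → ℝ) × (Fin l → ℝ)) : ℝ :=
  ((1 / (1 + γ) ^ 2) * (nsq z.1) ^ (1 + γ) + nsq z.2) ^ (1 / (2 + 2 * γ))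

/-- the Grushin inversion `x̃ = x/d², ỹ = y/d^{2+2γ}` -/
def ginv (γ : ℝ) (z : (Fin N → ℝ) × (Fin l → ℝ)) : (Fin N → ℝ) × (Fin l → ℝ) :=
  (fun i => z.1 i / gd γ z ^ 2, fun j => z.2 j / gd γ z ^ (2 + 2 * γ))

/-- divergence of a vector field on `ℝ^N × ℝ^l` -/
def gdiv (X : (Fin N → ℝ) × (Fin l → ℝ) → (Fin N → ℝ) × (Fin l → ℝ))
    (z : (Fin N → ℝ) × (Fin l → ℝ)) : ℝ :=
  (∑ i, pdx (fun w => (X w).1 i) i z) + ∑ j, pdy (fun w => (X w).2 j) j z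

/-- Euclidean dot product on `ℝ^N × ℝ^l` -/
def gdot (v w : (Fin N → ℝ) × (Fin l → ℝ)) : ℝ :=
  (∑ i, v.1 i * w.1 i) + ∑ j, v.2 j * w.2 j


lemma nsq_nonneg {n : ℕ} (x : Fin n → ℝ) : 0 ≤ nsq x := by
  unfold nsq; positivity

lemma nsq_pos {n : ℕ} {x : Fin n → ℝ} (hx : x ≠ 0) : 0 < nsq x := by
  obtain ⟨i, hi⟩ : ∃ i, x i ≠ 0 := by
    by_contra h; push_neg at h; exact hx (funext h)
  exact Finset.sum_pos' (fun i _ => sq_nonneg _)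
    ⟨i, Finset.mem_univ i, by positivity⟩

lemma nsq_update {n : ℕ} (x : Fin n → ℝ) (k : Fin n) (t : ℝ) :
    nsq (Function.update x k t) = nsq x - x k ^ 2 + t ^ 2 := by
  unfold nsq
  have h : ∀ i, Function.update x k t i ^ 2
      = Function.update (fun i => x i ^ 2) k (t ^ 2) i := by
    intro i; rcases eq_or_ne i k with h | h
    · subst h; simp
    · simp [h]
  simp_rw [h]
  rw [Finset.sum_update_of_mem (Finset.mem_univ k)]
  rw [Finset.sum_sdiff_eq_sub (Finset.subset_univ {k}), Finset.sum_singleton]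
  ring

lemma gd_rpow (γ : ℝ) (hγ : 0 ≤ γ) {N l : ℕ} (w : (Fin N → ℝ) × (Fin l → ℝ)) :
    gd γ w ^ (2 + 2 * γ) = (1 / (1 + γ) ^ 2) * (nsq w.1) ^ (1 + γ) + nsq w.2 := by
  unfold gd
  have hA : (0:ℝ) ≤ (1 / (1 + γ) ^ 2) * (nsq w.1) ^ (1 + γ) + nsq w.2 := by
    have h1 := nsq_nonneg w.1
    have h2 := nsq_nonneg w.2
    have h3 := Real.rpow_nonneg h1 (1 + γ)
    positivity
  rw [← Real.rpow_mul hA, show 1 / (2 + 2 * γ) * (2 + 2 * γ) = 1 by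
    field_simp, Real.rpow_one]

/-- for the Grushin inversion `y_j = ỹ_j d(z̃,0)^{-2-2γ}`,
`Σ_k (∂y_j/∂x̃_k)² + |x̃|^{2γ} Σ_h (∂y_j/∂ỹ_h)² = |x̃|^{2γ} d(z̃,0)^{-4-4γ}`. -/
theorem ginv_jacobian_y_diag (γ : ℝ) (hγ : 0 ≤ γ)
    (z : (Fin N → ℝ) × (Fin l → ℝ)) (hx : z.1 ≠ 0) (j : Fin l) :
    (∑ k, pdx (fun w => (ginv γ w).2 j) k z ^ 2)
        + (nsq z.1) ^ γ * ∑ h, pdy (fun w => (ginv γ w).2 j) h z ^ 2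
      = (nsq z.1) ^ γ * gd γ z ^ (-4 - 4 * γ) := by
  classical
  have h1γ : (0:ℝ) < 1 + γ := by linarith
  set X := nsq z.1 with hXdef
  have hX : 0 < X := nsq_pos hx
  set Y := nsq z.2 with hYdef
  have hY : 0 ≤ Y := nsq_nonneg z.2
  set A : ℝ := (1 / (1 + γ) ^ 2) * X ^ (1 + γ) + Y with hAdef
  have hXγ : (0:ℝ) < X ^ γ := Real.rpow_pos_of_pos hX γ
  have hA : 0 < A := by
    have h1 := Real.rpow_pos_of_pos hX (1 + γ)
    rw [hAdef]; positivity
  have hfun : ∀ w : (Fin N → ℝ) × (Fin l → ℝ), (ginv γ w).2 j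
      = w.2 j / ((1 / (1 + γ) ^ 2) * (nsq w.1) ^ (1 + γ) + nsq w.2) := by
    intro w; simp only [ginv]; rw [gd_rpow γ hγ]
  set C : ℝ := -(2 / (1 + γ)) * z.2 j * X ^ γ / A ^ 2 with hCdef
  have hpdx : ∀ k : Fin N, pdx (fun w => (ginv γ w).2 j) k z = C * z.1 k := by
    intro k
    unfold pdx
    simp only [hfun, nsq_update]
    simp only [← hXdef, ← hYdef]
    have hq : HasDerivAt (fun t : ℝ => X - z.1 k ^ 2 + t ^ 2) (2 * z.1 k) (z.1 k) := by
      have h := (hasDerivAt_pow 2 (z.1 k)).const_add (X - z.1 k ^ 2)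
      simpa using h
    have hr : HasDerivAt (fun s : ℝ => s ^ (1 + γ)) ((1 + γ) * X ^ γ)
        (X - z.1 k ^ 2 + z.1 k ^ 2) := by
      have h0 : X - z.1 k ^ 2 + z.1 k ^ 2 = X := by ring
      rw [h0]
      have h := Real.hasDerivAt_rpow_const (x := X) (p := 1 + γ) (Or.inl hX.ne')
      simpa [add_sub_cancel_left] using h
    have hcomp : HasDerivAt (fun t : ℝ => (X - z.1 k ^ 2 + t ^ 2) ^ (1 + γ))
        ((1 + γ) * X ^ γ * (2 * z.1 k)) (z.1 k) := by have := hr.comp (z.1 k) hq; exact this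
    have hden : HasDerivAt
        (fun t : ℝ => 1 / (1 + γ) ^ 2 * (X - z.1 k ^ 2 + t ^ 2) ^ (1 + γ) + Y)
        (1 / (1 + γ) ^ 2 * ((1 + γ) * X ^ γ * (2 * z.1 k))) (z.1 k) :=
      (hcomp.const_mul (1 / (1 + γ) ^ 2)).add_const Y
    have hval : (1 / (1 + γ) ^ 2) * (X - z.1 k ^ 2 + z.1 k ^ 2 : ℝ) ^ (1 + γ) + Y = A := by
      rw [show X - z.1 k ^ 2 + z.1 k ^ 2 = X by ring, hAdef]
    have hne : (1 / (1 + γ) ^ 2) * (X - z.1 k ^ 2 + z.1 k ^ 2 : ℝ) ^ (1 + γ) + Y ≠ 0 := by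
      rw [hval]; exact hA.ne'
    have hd := (hasDerivAt_const (z.1 k) (z.2 j)).div hden hne
    simp only [Pi.div_def] at hd
    rw [hd.deriv, hval, hCdef]
    field_simp
    ring
  have hpdy : ∀ h : Fin l, pdy (fun w => (ginv γ w).2 j) h z
      = ((if j = h then (1:ℝ) else 0) * A - z.2 j * (2 * z.2 h)) / A ^ 2 := by
    intro h
    unfold pdy
    simp only [hfun, nsq_update]
    simp only [← hXdef, ← hYdef]
    have hnum : HasDerivAt (fun t : ℝ => Function.update z.2 h t j)
        (if j = h then (1:ℝ) else 0) (z.2 h) := by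
      rcases eq_or_ne j h with rfl | hjh
      · simp only [Function.update_self, if_pos rfl, ↓reduceIte]
        exact hasDerivAt_id _
      · simp only [Function.update_of_ne hjh, if_neg hjh]
        exact hasDerivAt_const _ _
    have hden : HasDerivAt
        (fun t : ℝ => (1 / (1 + γ) ^ 2) * X ^ (1 + γ) + (Y - z.2 h ^ 2 + t ^ 2))
        (2 * z.2 h) (z.2 h) := by
      have hq : HasDerivAt (fun t : ℝ => Y - z.2 h ^ 2 + t ^ 2) (2 * z.2 h) (z.2 h) := by
        have h' := (hasDerivAt_pow 2 (z.2 h)).const_add (Y - z.2 h ^ 2)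
        simpa using h'
      exact hq.const_add _
    have hval : (1 / (1 + γ) ^ 2) * X ^ (1 + γ) + (Y - z.2 h ^ 2 + z.2 h ^ 2 : ℝ) = A := by
      rw [hAdef]; ring
    have hne : (1 / (1 + γ) ^ 2) * X ^ (1 + γ) + (Y - z.2 h ^ 2 + z.2 h ^ 2 : ℝ) ≠ 0 := by
      rw [hval]; exact hA.ne'
    have hd := hnum.div hden hne
    simp only [Pi.div_def] at hd
    rw [hd.deriv, hval, Function.update_eq_self]
  simp only [hpdx, hpdy]
  have hs1 : ∑ k, (C * z.1 k) ^ 2 = C ^ 2 * X := by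
    simp_rw [mul_pow, ← Finset.mul_sum]
    rw [hXdef]; rfl
  have hs2 : ∑ h, (((if j = h then (1:ℝ) else 0) * A - z.2 j * (2 * z.2 h)) / A ^ 2) ^ 2
      = (A ^ 2 - 4 * A * z.2 j ^ 2 + 4 * z.2 j ^ 2 * Y) / A ^ 4 := by
    have hterm : ∀ h : Fin l,
        (((if j = h then (1:ℝ) else 0) * A - z.2 j * (2 * z.2 h)) / A ^ 2) ^ 2
        = ((if j = h then A ^ 2 - 4 * A * (z.2 j * z.2 h) else 0)
            + 4 * z.2 j ^ 2 * z.2 h ^ 2) / A ^ 4 := by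
      intro h
      rcases eq_or_ne j h with rfl | hjh
      · simp only [if_pos rfl, ↓reduceIte]
        field_simp
        ring
      · simp only [if_neg hjh]
        field_simp
        ring
    rw [Finset.sum_congr rfl (fun h _ => hterm h), ← Finset.sum_div,
      Finset.sum_add_distrib, Finset.sum_ite_eq, if_pos (Finset.mem_univ j)]
    have : ∑ h, 4 * z.2 j ^ 2 * z.2 h ^ 2 = 4 * z.2 j ^ 2 * Y := by
      rw [← Finset.mul_sum, hYdef]; rfl
    rw [this]
    ring
  rw [hs1, hs2]
  have hgd : gd γ z ^ (-4 - 4 * γ) = 1 / A ^ 2 := by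
    unfold gd
    have hA0 : (0:ℝ) ≤ (1 / (1 + γ) ^ 2) * X ^ (1 + γ) + Y := hA.le
    rw [← Real.rpow_mul hA0, show 1 / (2 + 2 * γ) * (-4 - 4 * γ) = -2 by
      field_simp; ring]
    rw [show (-2 : ℝ) = -(2:ℕ) by norm_num, Real.rpow_neg hA0, Real.rpow_natCast]
    rw [hAdef]
    field_simp
  rw [hgd]
  have hfact : X ^ (1 + γ) = X * X ^ γ := by
    rw [Real.rpow_add hX, Real.rpow_one]
  have hrel : (1 / (1 + γ) ^ 2) * (X * X ^ γ) + Y = A := by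
    rw [hAdef, hfact]
  rw [hCdef]
  clear_value X Y A C
  have hAne : A ≠ 0 := hA.ne'
  have h1ne : (1 + γ) ≠ 0 := h1γ.ne'
  have key : X * X ^ γ = (A - Y) * (1 + γ) ^ 2 := by
    have h2 : (1 + γ) ^ 2 ≠ 0 := pow_ne_zero _ h1ne
    field_simp at hrel
    linarith [hrel]
  field_simp
  linear_combination (4 * z.2 j ^ 2) * key
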